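/- Let m ≥ 2, let μ be a probability measure on B_r(0) ⊂ ℝ^m that is invariant under rotations about the origin and assigns zero measure to every Lebesgue-null set, and let α > r. Let z ∈ ℝ^m with ‖z‖ ∈ (α, α + r). Then R^{(α,μ,m)}(z) := ∫_{B_α(z) ∩ B_r(0)}(α − d(z,x)) dμ(x) ≤ (α + r − ‖z‖) · (√π/2) · √(m/2) · (α/‖z‖)^{m-2}. -/

import Mathlib

set_option maxHeartbeats 1000000


open MeasureTheory Metric Real
open scoped RealInnerProductSpace

namespace Stmt14Aux

abbrev ES (m : ℕ) := EuclideanSpace ℝ (Fin m)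

variable {m : ℕ}

lemma cone_preimage (cc : ℝ) (R : ES m ≃ₗᵢ[ℝ] ES m) (v : ES m) :
    ⇑R ⁻¹' {x | cc * (‖x‖ * ‖v‖) ≤ ⟪x, v⟫} =
      {x | cc * (‖x‖ * ‖R.symm v‖) ≤ ⟪x, R.symm v⟫} := by
  ext x
  simp only [Set.mem_preimage, Set.mem_setOf_eq, R.norm_map]
  rw [show (⟪R x, v⟫) = ⟪x, R.symm v⟫ by
    conv_lhs => rw [← R.apply_symm_apply v, R.inner_map_map], R.symm.norm_map]

lemma cone_smul (cc : ℝ) (v : ES m) {l : ℝ} (hl : 0 < l) :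
    {x : ES m | cc * (‖x‖ * ‖l • v‖) ≤ ⟪x, l • v⟫} =
      {x | cc * (‖x‖ * ‖v‖) ≤ ⟪x, v⟫} := by
  ext x
  simp only [Set.mem_setOf_eq, norm_smul, real_inner_smul_right, Real.norm_eq_abs,
    abs_of_pos hl]
  rw [show cc * (‖x‖ * (l * ‖v‖)) = l * (cc * (‖x‖ * ‖v‖)) by ring]
  exact mul_le_mul_iff_right₀ hl

lemma cone_measurable (cc : ℝ) (v : ES m) :
    MeasurableSet {x : ES m | cc * (‖x‖ * ‖v‖) ≤ ⟪x, v⟫} := by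
  refine (isClosed_le (by fun_prop) ?_).measurableSet
  exact Continuous.inner continuous_id continuous_const

lemma cone_transport (cc : ℝ) (ν : Measure (ES m))
    (hinv : ∀ R : ES m ≃ₗᵢ[ℝ] ES m, ν.map R = ν) (B : Set (ES m))
    (hB : MeasurableSet B) (hBinv : ∀ R : ES m ≃ₗᵢ[ℝ] ES m, ⇑R ⁻¹' B = B)
    {v v' : ES m} (hv : v ≠ 0) (hv' : v' ≠ 0) :
    ν ({x | cc * (‖x‖ * ‖v‖) ≤ ⟪x, v⟫} ∩ B) =
      ν ({x | cc * (‖x‖ * ‖v'‖) ≤ ⟪x, v'⟫} ∩ B) := by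
  set u : ES m := ‖v‖⁻¹ • v with hu_def
  set u' : ES m := ‖v'‖⁻¹ • v' with hu'_def
  have hnu : ‖u‖ = 1 := norm_smul_inv_norm hv
  have hnu' : ‖u'‖ = 1 := norm_smul_inv_norm hv'
  set R : ES m ≃ₗᵢ[ℝ] ES m := Submodule.reflection (Submodule.span ℝ {u' - u})ᗮ with hR
  have hRu' : R u' = u := Submodule.reflection_sub (hnu'.trans hnu.symm)
  have hRsymm : R.symm u' = u := by
    have hsy : R.symm = R := by rw [hR, Submodule.reflection_symm]
    rw [hsy]; exact hRu'
  have hcv : {x : ES m | cc * (‖x‖ * ‖v‖) ≤ ⟪x, v⟫} =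
      {x | cc * (‖x‖ * ‖u‖) ≤ ⟪x, u⟫} := by
    rw [hu_def, cone_smul cc v (inv_pos.mpr (norm_pos_iff.mpr hv))]
  have hcv' : {x : ES m | cc * (‖x‖ * ‖v'‖) ≤ ⟪x, v'⟫} =
      {x | cc * (‖x‖ * ‖u'‖) ≤ ⟪x, u'⟫} := by
    rw [hu'_def, cone_smul cc v' (inv_pos.mpr (norm_pos_iff.mpr hv'))]
  have hpre : ⇑R ⁻¹' ({x | cc * (‖x‖ * ‖u'‖) ≤ ⟪x, u'⟫} ∩ B) =
      {x | cc * (‖x‖ * ‖u‖) ≤ ⟪x, u⟫} ∩ B := by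
    rw [Set.preimage_inter, cone_preimage, hRsymm, hBinv]
  calc ν ({x | cc * (‖x‖ * ‖v‖) ≤ ⟪x, v⟫} ∩ B)
      = ν (⇑R ⁻¹' ({x | cc * (‖x‖ * ‖u'‖) ≤ ⟪x, u'⟫} ∩ B)) := by rw [hpre, hcv]
    _ = (ν.map R) ({x | cc * (‖x‖ * ‖u'‖) ≤ ⟪x, u'⟫} ∩ B) := by
        rw [Measure.map_apply R.continuous.measurable ((cone_measurable cc u').inter hB)]
    _ = ν ({x | cc * (‖x‖ * ‖v'‖) ≤ ⟪x, v'⟫} ∩ B) := by rw [hinv, hcv']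

lemma volume_zero_singleton (hm : 1 ≤ m) : volume ({0} : Set (ES m)) = 0 := by
  haveI : Nonempty (Fin m) := ⟨⟨0, by omega⟩⟩
  have h : ({0} : Set (ES m)) = closedBall 0 0 := by simp
  rw [h, EuclideanSpace.volume_closedBall]
  simp only [ENNReal.ofReal_zero, Fintype.card_fin]
  rw [zero_pow (by omega : m ≠ 0), zero_mul]

lemma cone_fubini (hm : 1 ≤ m) (cc : ℝ) (μ : Measure (ES m)) [IsProbabilityMeasure μ]
    (hrot : ∀ R : ES m ≃ₗᵢ[ℝ] ES m, μ.map R = μ) (hac : μ ≪ volume)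
    {z : ES m} (hz : z ≠ 0) :
    μ {x | cc * (‖x‖ * ‖z‖) ≤ ⟪x, z⟫} * volume (ball (0 : ES m) 1) =
      volume ({x | cc * (‖x‖ * ‖z‖) ≤ ⟪x, z⟫} ∩ ball (0 : ES m) 1) := by
  have h0 : volume ({0} : Set (ES m)) = 0 := volume_zero_singleton hm
  set lam : Measure (ES m) := volume.restrict (ball (0 : ES m) 1) with hlam
  set T : Set (ES m × ES m) := {p | cc * (‖p.1‖ * ‖p.2‖) ≤ ⟪p.1, p.2⟫} with hT
  have hTm : MeasurableSet T := by
    refine (isClosed_le (by fun_prop) ?_).measurableSet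
    exact continuous_inner
  have hballinv : ∀ R : ES m ≃ₗᵢ[ℝ] ES m, ⇑R ⁻¹' ball (0 : ES m) 1 = ball 0 1 := by
    intro R
    rw [R.preimage_ball, map_zero]
  have hvolinv : ∀ R : ES m ≃ₗᵢ[ℝ] ES m,
      (volume : Measure (ES m)).map R = volume := fun R => R.measurePreserving.map_eq
  have hsec1 : ∀ x : ES m, Prod.mk x ⁻¹' T = {w : ES m | cc * (‖w‖ * ‖x‖) ≤ ⟪w, x⟫} := by
    intro x; ext w
    simp only [Set.mem_preimage, hT, Set.mem_setOf_eq, real_inner_comm x w, mul_comm ‖x‖ ‖w‖]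
  have hsec2 : ∀ w : ES m, (fun x : ES m => (x, w)) ⁻¹' T =
      {x : ES m | cc * (‖x‖ * ‖w‖) ≤ ⟪x, w⟫} := fun w => rfl
  have h1 : (μ.prod lam) T = ∫⁻ x, lam (Prod.mk x ⁻¹' T) ∂μ := Measure.prod_apply hTm
  have h2 : (μ.prod lam) T = ∫⁻ w, μ ((fun x => (x, w)) ⁻¹' T) ∂lam :=
    Measure.prod_apply_symm hTm
  have hμ0 : ∀ᵐ x ∂μ, x ≠ 0 := by
    refine (ae_iff.mpr ?_)
    simpa using hac h0
  have hlam0 : ∀ᵐ w ∂lam, w ≠ 0 := by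
    refine (ae_iff.mpr ?_)
    have : lam {w : ES m | ¬ w ≠ 0} ≤ volume {w : ES m | ¬ w ≠ 0} :=
      Measure.restrict_le_self _
    simpa using le_antisymm (le_trans this (by simpa using h0.le)) zero_le
  have hRside : ∫⁻ w, μ ((fun x => (x, w)) ⁻¹' T) ∂lam =
      μ {x | cc * (‖x‖ * ‖z‖) ≤ ⟪x, z⟫} * volume (ball (0 : ES m) 1) := by
    have hcongr : ∀ᵐ w ∂lam, μ ((fun x => (x, w)) ⁻¹' T) =
        μ {x | cc * (‖x‖ * ‖z‖) ≤ ⟪x, z⟫} := by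
      filter_upwards [hlam0] with w hw
      rw [hsec2 w]
      have := cone_transport cc μ hrot Set.univ MeasurableSet.univ
        (fun R => Set.preimage_univ) hw hz
      simpa using this
    rw [lintegral_congr_ae hcongr, lintegral_const, hlam, Measure.restrict_apply_univ]
  have hLside : ∫⁻ x, lam (Prod.mk x ⁻¹' T) ∂μ =
      volume ({x | cc * (‖x‖ * ‖z‖) ≤ ⟪x, z⟫} ∩ ball (0 : ES m) 1) := by
    have hcongr : ∀ᵐ x ∂μ, lam (Prod.mk x ⁻¹' T) =
        volume ({x | cc * (‖x‖ * ‖z‖) ≤ ⟪x, z⟫} ∩ ball (0 : ES m) 1) := by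
      filter_upwards [hμ0] with x hx
      rw [hsec1 x, hlam, Measure.restrict_apply (cone_measurable cc x)]
      exact cone_transport cc volume hvolinv (ball 0 1) measurableSet_ball hballinv hx hz
    rw [lintegral_congr_ae hcongr, lintegral_const, measure_univ, mul_one]
  rw [← hRside, ← h2, h1, hLside]

lemma tube_volume (n : ℕ) (hn : 1 ≤ n) {s : ℝ} (hs0 : 0 ≤ s)
    {u : ES (n+1)} (hu : ‖u‖ = 1) :
    volume {w : ES (n+1) | (0 ≤ ⟪u, w⟫ ∧ ⟪u, w⟫ ≤ 1) ∧ ‖w‖^2 - ⟪u, w⟫^2 ≤ s^2} =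
      ENNReal.ofReal s ^ n * ENNReal.ofReal (√π ^ n / Gamma ((n : ℝ)/2 + 1)) := by
  haveI : Nonempty (Fin n) := ⟨⟨0, by omega⟩⟩
  obtain ⟨b, hb⟩ : ∃ b : OrthonormalBasis (Fin (n+1)) ℝ (ES (n+1)),
      ∀ i ∈ ({0} : Set (Fin (n+1))), b i = (fun _ => u) i := by
    refine Orthonormal.exists_orthonormalBasis_extension_of_card_eq ?_ ?_
    · simp [finrank_euclideanSpace_fin]
    · constructor
      · intro i; simpa using hu
      · intro i j hij
        exact absurd (Subtype.ext ((i.2 : (i:Fin (n+1)) ∈ ({0}:Set _)).trans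
          (j.2 : (j:Fin (n+1)) ∈ ({0}:Set _)).symm)) hij
  have hb0 : b 0 = u := hb 0 rfl
  set Q2 : Set (Fin (n+1) → ℝ) :=
    {f | (0 ≤ f 0 ∧ f 0 ≤ 1) ∧ (∑ i, f i^2) - f 0^2 ≤ s^2} with hQ2
  set B2 : Set (Fin n → ℝ) := {g | ∑ j, g j^2 ≤ s^2} with hB2
  have hB2m : MeasurableSet B2 := by
    refine (isClosed_le ?_ continuous_const).measurableSet
    exact continuous_finset_sum _ fun i _ => (continuous_apply i).pow 2
  have hQ2m : MeasurableSet Q2 := by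
    rw [hQ2, Set.setOf_and, Set.setOf_and]
    refine MeasurableSet.inter (MeasurableSet.inter ?_ ?_) ?_
    · exact (isClosed_le continuous_const (continuous_apply 0)).measurableSet
    · exact (isClosed_le (continuous_apply 0) continuous_const).measurableSet
    · refine (isClosed_le ?_ continuous_const).measurableSet
      exact (continuous_finset_sum _ fun i _ => (continuous_apply i).pow 2).sub
        ((continuous_apply 0).pow 2)
  have e1 := EuclideanSpace.volume_preserving_symm_measurableEquiv_toLp (Fin (n+1))
  have hnorm : ∀ w : ES (n+1), ‖w‖^2 = ∑ i, (b.repr w i)^2 := by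
    intro w
    rw [← b.repr.norm_map w, EuclideanSpace.norm_eq,
      Real.sq_sqrt (by positivity)]
    simp [sq_abs]
  have htube : {w : ES (n+1) | (0 ≤ ⟪u, w⟫ ∧ ⟪u, w⟫ ≤ 1) ∧ ‖w‖^2 - ⟪u, w⟫^2 ≤ s^2} =
      ⇑b.repr ⁻¹' (⇑(MeasurableEquiv.toLp 2 (Fin (n+1) → ℝ)).symm ⁻¹' Q2) := by
    ext w
    have hr0 : b.repr w 0 = ⟪u, w⟫ := by rw [b.repr_apply_apply, hb0]
    simp only [Set.mem_setOf_eq, Set.mem_preimage, hQ2,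
      MeasurableEquiv.coe_toLp_symm]
    rw [hr0, hnorm w]
  rw [htube,
    (b.repr.measurePreserving).measure_preimage
      ((MeasurableEquiv.toLp 2 (Fin (n+1) → ℝ)).symm.measurable hQ2m).nullMeasurableSet,
    e1.measure_preimage hQ2m.nullMeasurableSet]
  have hsplit : Q2 = ⇑(MeasurableEquiv.piFinSuccAbove (fun _ => ℝ) 0) ⁻¹'
      ((Set.Icc (0:ℝ) 1) ×ˢ B2) := by
    ext f
    simp only [Set.mem_preimage, Set.mem_prod, Set.mem_Icc, hQ2, hB2, Set.mem_setOf_eq]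
    have hsum : ∑ i, f i^2 = f 0^2 + ∑ j, f ((0 : Fin (n+1)).succAbove j)^2 :=
      Fin.sum_univ_succAbove (fun i => f i^2) 0
    constructor
    · rintro ⟨h1, h2⟩
      exact ⟨h1, by rw [hsum] at h2; simpa [Fin.tail] using h2⟩
    · rintro ⟨h1, h2⟩
      exact ⟨h1, by rw [hsum]; simpa [Fin.tail] using h2⟩
  rw [hsplit,
    (volume_preserving_piFinSuccAbove (fun _ : Fin (n+1) => ℝ) 0).measure_preimage
      (measurableSet_Icc.prod hB2m).nullMeasurableSet,
    Measure.volume_eq_prod, Measure.prod_prod, Real.volume_Icc]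
  have hB2ball : B2 = ⇑(MeasurableEquiv.toLp 2 (Fin n → ℝ)).symm.symm ⁻¹'
      (closedBall (0 : ES n) s) := by
    ext g
    have hco : ∀ i, ‖((MeasurableEquiv.toLp 2 (Fin n → ℝ)).symm.symm g) i‖ = |g i| :=
      fun i => rfl
    simp only [Set.mem_preimage, mem_closedBall_zero_iff, hB2, Set.mem_setOf_eq,
      EuclideanSpace.norm_eq, hco, sq_abs, Real.sqrt_le_left hs0]
  rw [hB2ball,
    ((EuclideanSpace.volume_preserving_symm_measurableEquiv_toLp (Fin n)).symm _).measure_preimage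
      measurableSet_closedBall.nullMeasurableSet,
    EuclideanSpace.volume_closedBall]
  norm_num [Fintype.card_fin]

lemma gamma_ratio {x : ℝ} (hx : 1 ≤ x) :
    Gamma (x + 1) ^ 2 ≤ (x + 1/2) * Gamma (x + 1/2) ^ 2 := by
  have hx0 : (0:ℝ) < x := by linarith
  have h1 : (0:ℝ) < x + 1/2 := by linarith
  have h2 : (0:ℝ) < x + 3/2 := by linarith
  have h3 : (0:ℝ) < x + 1 := by linarith
  have hG1 : 0 < Gamma (x + 1/2) := Gamma_pos_of_pos h1
  have hG2 : 0 < Gamma (x + 3/2) := Gamma_pos_of_pos h2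
  have hG3 : 0 < Gamma (x + 1) := Gamma_pos_of_pos h3
  have hconv := convexOn_log_Gamma.2 (Set.mem_Ioi.mpr h1) (Set.mem_Ioi.mpr h2)
    (by norm_num : (0:ℝ) ≤ (1:ℝ)/2) (by norm_num : (0:ℝ) ≤ (1:ℝ)/2) (by norm_num)
  have hmid : (1/2 : ℝ) • (x + 1/2) + (1/2 : ℝ) • (x + 3/2) = x + 1 := by
    simp only [smul_eq_mul]; ring
  rw [hmid] at hconv
  simp only [Function.comp_apply, smul_eq_mul] at hconv
  -- exponentiate
  have hsq : Gamma (x+1)^2 ≤ Gamma (x+1/2) * Gamma (x+3/2) := by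
    have hlog : Real.log (Gamma (x+1)^2) ≤ Real.log (Gamma (x+1/2) * Gamma (x+3/2)) := by
      rw [Real.log_pow, Real.log_mul hG1.ne' hG2.ne']
      push_cast
      linarith
    calc Gamma (x+1)^2 = Real.exp (Real.log (Gamma (x+1)^2)) :=
          (Real.exp_log (by positivity)).symm
      _ ≤ Real.exp (Real.log (Gamma (x+1/2) * Gamma (x+3/2))) := Real.exp_le_exp.mpr hlog
      _ = Gamma (x+1/2) * Gamma (x+3/2) := Real.exp_log (by positivity)
  have hrec : Gamma (x + 3/2) = (x + 1/2) * Gamma (x + 1/2) := by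
    have : x + 3/2 = (x + 1/2) + 1 := by ring
    rw [this, Real.Gamma_add_one h1.ne']
  rw [hrec] at hsq
  nlinarith [hsq]

end Stmt14Aux

open Stmt14Aux

theorem stmt14 (m : ℕ) (hm : 2 ≤ m) (r α : ℝ) (hr : 0 < r) (hα : r < α)
    (μ : Measure (EuclideanSpace ℝ (Fin m))) [IsProbabilityMeasure μ]
    (hsupp : μ (closedBall 0 r) = 1)
    (hrot : ∀ R : EuclideanSpace ℝ (Fin m) ≃ₗᵢ[ℝ] EuclideanSpace ℝ (Fin m),
      μ.map R = μ)
    (hac : μ ≪ volume)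
    (z : EuclideanSpace ℝ (Fin m)) (hz : ‖z‖ ∈ Set.Ioo α (α + r)) :
    (∫ x in closedBall z α ∩ closedBall (0 : EuclideanSpace ℝ (Fin m)) r,
        (α - dist z x) ∂μ) ≤
      (α + r - ‖z‖) * (Real.sqrt π / 2) * Real.sqrt ((m : ℝ) / 2) *
        (α / ‖z‖) ^ (m - 2) := by
  obtain ⟨n, rfl⟩ : ∃ n, m = n + 1 := ⟨m - 1, by omega⟩
  have hn : 1 ≤ n := by omega
  obtain ⟨hz1, hz2⟩ := hz
  have hα0 : (0:ℝ) < α := hr.trans hα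
  have hzn : (0:ℝ) < ‖z‖ := hα0.trans hz1
  have hznz : z ≠ 0 := norm_pos_iff.mp hzn
  set s : ℝ := α / ‖z‖ with hs_def
  have hs0 : 0 < s := div_pos hα0 hzn
  have hs1 : s < 1 := (div_lt_one hzn).mpr hz1
  set cc : ℝ := Real.sqrt (1 - s^2) with hcc_def
  have hcc2 : cc^2 = 1 - s^2 := Real.sq_sqrt (by nlinarith [hs0, hs1, sq_nonneg s])
  have hcc0 : 0 ≤ cc := Real.sqrt_nonneg _
  set S : Set (ES (n+1)) := closedBall z α ∩ closedBall (0 : ES (n+1)) r with hS_def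
  set C : Set (ES (n+1)) := {x | cc * (‖x‖ * ‖z‖) ≤ ⟪x, z⟫} with hC_def
  -- Step 1 : bound the integrand
  have hSm : MeasurableSet S := measurableSet_closedBall.inter measurableSet_closedBall
  have hScomp : IsCompact S :=
    (isCompact_closedBall z α).inter_right Metric.isClosed_closedBall
  have hint : IntegrableOn (fun x => α - dist z x) S μ :=
    ContinuousOn.integrableOn_compact hScomp
      ((continuous_const.sub (continuous_const.dist continuous_id)).continuousOn)
  have hstep1 : (∫ x in S, (α - dist z x) ∂μ) ≤ (α + r - ‖z‖) * (μ S).toReal := by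
    have hmono := setIntegral_mono_on hint
      (integrableOn_const (C := α + r - ‖z‖) (measure_lt_top μ S).ne enorm_ne_top) hSm
      (fun x hx => by
        have hx2 : ‖x‖ ≤ r := by
          have := hx.2
          rwa [mem_closedBall, dist_zero_right] at this
        have hd : ‖z‖ - ‖x‖ ≤ dist z x := by
          rw [dist_eq_norm]
          exact norm_sub_norm_le z x
        show α - dist z x ≤ α + r - ‖z‖
        linarith)
    rwa [setIntegral_const, smul_eq_mul, mul_comm] at hmono
  -- Step 2 : the region is inside the cone
  have hsub : S ⊆ C := by
    intro x hx
    have hx1 : dist x z ≤ α := mem_closedBall.mp hx.1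
    have hxz : ‖x - z‖ ≤ α := by rwa [← dist_eq_norm]
    have hexp : ‖x - z‖^2 = ‖x‖^2 - 2 * ⟪x, z⟫ + ‖z‖^2 := norm_sub_sq_real x z
    have hle : ‖x - z‖^2 ≤ α^2 := pow_le_pow_left₀ (norm_nonneg _) hxz 2
    have hccz : cc^2 * ‖z‖^2 = ‖z‖^2 - α^2 := by
      rw [hcc2, hs_def, sub_mul, one_mul, div_pow, div_mul_cancel₀]
      exact pow_ne_zero 2 hzn.ne'
    show cc * (‖x‖ * ‖z‖) ≤ ⟪x, z⟫
    nlinarith only [hle, hexp, hccz, sq_nonneg (‖x‖ - cc * ‖z‖)]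
  -- Step 3 : Fubini identity
  have hfub := cone_fubini (by omega : 1 ≤ n + 1) cc μ hrot hac hznz
  rw [← hC_def] at hfub
  -- Step 4 : cone ∩ ball contained in tube
  set u : ES (n+1) := ‖z‖⁻¹ • z with hu_def
  have hu : ‖u‖ = 1 := norm_smul_inv_norm hznz
  have htube_sub : C ∩ ball (0 : ES (n+1)) 1 ⊆
      {w : ES (n+1) | (0 ≤ ⟪u, w⟫ ∧ ⟪u, w⟫ ≤ 1) ∧ ‖w‖^2 - ⟪u, w⟫^2 ≤ s^2} := by
    rintro w ⟨hw1, hw2⟩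
    have hwb : ‖w‖ < 1 := by rwa [mem_ball, dist_zero_right] at hw2
    have hwc : cc * (‖w‖ * ‖z‖) ≤ ⟪w, z⟫ := hw1
    have hwz0 : 0 ≤ ⟪w, z⟫ := le_trans (by positivity) hwc
    have hiu : ⟪u, w⟫ = ‖z‖⁻¹ * ⟪w, z⟫ := by
      rw [hu_def, real_inner_smul_left, real_inner_comm z w]
    have ht0 : 0 ≤ ⟪u, w⟫ := by
      rw [hiu]; exact mul_nonneg (inv_nonneg.mpr hzn.le) hwz0
    have ht1 : ⟪u, w⟫ ≤ 1 := by
      refine (real_inner_le_norm u w).trans ?_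
      rw [hu, one_mul]; exact hwb.le
    have htcc : cc * ‖w‖ ≤ ⟪u, w⟫ := by
      rw [hiu, ← mul_le_mul_iff_right₀ hzn]
      calc ‖z‖ * (cc * ‖w‖) = cc * (‖w‖ * ‖z‖) := by ring
        _ ≤ ⟪w, z⟫ := hwc
        _ = ‖z‖ * (‖z‖⁻¹ * ⟪w, z⟫) := by field_simp
    refine ⟨⟨ht0, ht1⟩, ?_⟩
    have hcw0 : 0 ≤ cc * ‖w‖ := mul_nonneg hcc0 (norm_nonneg w)
    have ht2 : (cc * ‖w‖) * (cc * ‖w‖) ≤ ⟪u, w⟫ * ⟪u, w⟫ :=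
      mul_le_mul htcc htcc hcw0 ht0
    have hw2le : ‖w‖^2 ≤ 1 := by nlinarith only [hwb, norm_nonneg w]
    have hccW : cc^2 * ‖w‖^2 = (1 - s^2) * ‖w‖^2 := by rw [hcc2]
    have hsprod : 0 ≤ s^2 * (1 - ‖w‖^2) := mul_nonneg (sq_nonneg s) (by linarith)
    nlinarith only [ht2, hccW, hsprod]
  -- Step 5 : volume comparison
  have hG1 : 0 < Gamma ((n:ℝ)/2 + 1) := Gamma_pos_of_pos (by positivity)
  have hG2 : 0 < Gamma (((n:ℝ)+1)/2 + 1) := Gamma_pos_of_pos (by positivity)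
  set D : ℝ := Real.sqrt π / 2 * Real.sqrt (((n:ℝ)+1)/2) * s^(n-1) with hD_def
  have hD0 : 0 ≤ D := by
    rw [hD_def]; positivity
  have hVb_pos : 0 < volume (ball (0 : ES (n+1)) 1) := measure_ball_pos _ _ one_pos
  have hVb_ne_top : volume (ball (0 : ES (n+1)) 1) ≠ ⊤ := measure_ball_lt_top.ne
  have hchain : μ C * volume (ball (0 : ES (n+1)) 1) ≤
      ENNReal.ofReal s ^ n * ENNReal.ofReal (√π ^ n / Gamma ((n:ℝ)/2 + 1)) := by
    rw [hfub]
    refine (measure_mono htube_sub).trans ?_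
    exact (tube_volume n hn hs0.le hu).le
  -- real-number inequality
  have hnn : (1:ℝ) ≤ (n:ℝ) := Nat.one_le_cast.mpr hn
  have hreal : s^n * (√π ^ n / Gamma ((n:ℝ)/2 + 1)) ≤
      D * (√π ^ (n+1) / Gamma (((n:ℝ)+1)/2 + 1)) := by
    rw [hD_def]
    set P : ℝ := Real.sqrt π with hP_def
    set a : ℝ := Real.sqrt (((n:ℝ)+1)/2) with ha_def
    have hP0 : 0 ≤ P := Real.sqrt_nonneg _
    have hP2 : P^2 = π := Real.sq_sqrt Real.pi_pos.le
    have ha0 : 0 ≤ a := Real.sqrt_nonneg _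
    have ha2 : a^2 = ((n:ℝ)+1)/2 := Real.sq_sqrt (by positivity)
    have hg := gamma_ratio (x := ((n:ℝ)+1)/2) (by linarith)
    have harg : ((n:ℝ)+1)/2 + 1/2 = (n:ℝ)/2 + 1 := by ring
    rw [harg] at hg
    have hkey : s * Gamma (((n:ℝ)+1)/2 + 1) ≤ P/2 * a * P * Gamma ((n:ℝ)/2 + 1) := by
      have hpi3 : (3:ℝ) < π := Real.pi_gt_three
      have hfin : (s * Gamma (((n:ℝ)+1)/2 + 1))^2 ≤
          (P/2 * a * P * Gamma ((n:ℝ)/2 + 1))^2 := by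
        have e : (P/2 * a * P * Gamma ((n:ℝ)/2 + 1))^2
            = P^2 * P^2 * a^2 * Gamma ((n:ℝ)/2 + 1)^2 / 4 := by ring
        rw [e, hP2, ha2]
        have hs2 : s^2 ≤ 1 := by nlinarith only [hs0, hs1]
        have hA : 0 ≤ (1 - s^2) * Gamma (((n:ℝ)+1)/2 + 1)^2 :=
          mul_nonneg (by linarith) (sq_nonneg _)
        have hpi9 : 0 ≤ π * π - 9 := by nlinarith only [hpi3]
        have hc : 0 ≤ (π * π - 9) * ((n:ℝ) + 1) := mul_nonneg hpi9 (by positivity)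
        have hb : 0 ≤ (π * π * ((n:ℝ)+1) / 8 - ((n:ℝ)/2 + 1)) * Gamma ((n:ℝ)/2 + 1)^2 := by
          refine mul_nonneg ?_ (sq_nonneg _)
          nlinarith only [hc, hnn]
        nlinarith only [hA, hg, hb]
      calc s * Gamma (((n:ℝ)+1)/2 + 1)
          = √((s * Gamma (((n:ℝ)+1)/2 + 1))^2) :=
            (Real.sqrt_sq (by positivity)).symm
        _ ≤ √((P/2 * a * P * Gamma ((n:ℝ)/2 + 1))^2) := Real.sqrt_le_sqrt hfin
        _ = P/2 * a * P * Gamma ((n:ℝ)/2 + 1) := Real.sqrt_sq (by positivity)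
    have hmul := mul_le_mul_of_nonneg_left hkey
      (show (0:ℝ) ≤ s^(n-1) * P^n by positivity)
    have hsplit_s : s^n = s^(n-1) * s := by
      conv_lhs => rw [show n = (n-1) + 1 by omega]
      rw [pow_succ]
    have hsplit_P : P^(n+1) = P^n * P := pow_succ P n
    have e1 : s^n * (P^n / Gamma ((n:ℝ)/2 + 1))
        = (s^n * P^n) / Gamma ((n:ℝ)/2 + 1) := by ring
    have e2 : P/2 * a * s^(n-1) * (P^(n+1) / Gamma (((n:ℝ)+1)/2 + 1))
        = (P/2 * a * s^(n-1) * P^(n+1)) / Gamma (((n:ℝ)+1)/2 + 1) := by ring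
    rw [e1, e2, div_le_div_iff₀ hG1 hG2]
    calc s^n * P^n * Gamma (((n:ℝ)+1)/2 + 1)
        = s^(n-1) * P^n * (s * Gamma (((n:ℝ)+1)/2 + 1)) := by rw [hsplit_s]; ring
      _ ≤ s^(n-1) * P^n * (P/2 * a * P * Gamma ((n:ℝ)/2 + 1)) := hmul
      _ = P/2 * a * s^(n-1) * P^(n+1) * Gamma ((n:ℝ)/2 + 1) := by rw [hsplit_P]; ring
  -- Step 6 : conclude
  have hVb : volume (ball (0 : ES (n+1)) 1) =
      ENNReal.ofReal (√π ^ (n+1) / Gamma (((n:ℝ)+1)/2 + 1)) := by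
    rw [EuclideanSpace.volume_ball]
    simp only [Fintype.card_fin, ENNReal.ofReal_one, one_pow, one_mul]
    push_cast
    ring_nf
  have hμC : μ C ≤ ENNReal.ofReal D := by
    refine (ENNReal.mul_le_mul_iff_left hVb_pos.ne' hVb_ne_top).mp ?_
    refine hchain.trans ?_
    rw [hVb, ← ENNReal.ofReal_pow hs0.le, ← ENNReal.ofReal_mul (by positivity),
      ← ENNReal.ofReal_mul hD0]
    exact ENNReal.ofReal_le_ofReal hreal
  have hfinal : (μ S).toReal ≤ D :=
    ENNReal.toReal_le_of_le_ofReal hD0 ((measure_mono hsub).trans hμC)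
  have hco : 0 ≤ α + r - ‖z‖ := by linarith
  calc (∫ x in S, (α - dist z x) ∂μ)
      ≤ (α + r - ‖z‖) * (μ S).toReal := hstep1
    _ ≤ (α + r - ‖z‖) * D := mul_le_mul_of_nonneg_left hfinal hco
    _ = (α + r - ‖z‖) * (Real.sqrt π / 2) * Real.sqrt ((((n:ℕ)+1 : ℕ) : ℝ) / 2) *
        s ^ (n + 1 - 2) := by
        rw [hD_def]
        have hexp : n + 1 - 2 = n - 1 := by omega
        rw [hexp]
        push_cast
        ring
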